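/- Let (∅,Q), (A,P) ∈ ℰ^N with ∅ ≠ A and (A,P) ⊒ (∅,Q). Then the interval [(∅,Q),(A,P)] in ℰ^N is isomorphic to the product ℰ^{|Q^A|} × [Q^{A^c}, P^{A^c}], where ℰ^{|Q^A|} is the lattice of embedded subsets of a |Q^A|-set and [Q^{A^c},P^{A^c}] is an interval in the partition lattice of A^c; consequently μ_{ℰ^N}((∅,Q),(A,P)) = μ_{ℰ^{|Q^A|}}·μ_{𝒫^{A^c}}(Q^{A^c},P^{A^c}), where μ_{ℰ^m} denotes the Möbius function of ℰ^m evaluated between its bottom and top elements. -/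

import Mathlib

open scoped BigOperators

/-- `modp n A` is the modular partition `P^A_⊥` of `Fin n` whose unique (possibly)
non-singleton block is `A`, all other blocks being singletons. -/
def modp (n : ℕ) (A : Set (Fin n)) : Setoid (Fin n) where
  r x y := x = y ∨ (x ∈ A ∧ y ∈ A)
  iseqv := by
    refine ⟨fun _ => Or.inl rfl, ?_, ?_⟩
    · rintro x y (rfl | ⟨hx, hy⟩)
      · exact Or.inl rfl
      · exact Or.inr ⟨hy, hx⟩
    · rintro x y z (rfl | ⟨hx, hy⟩) h
      · exact h
      · rcases h with rfl | ⟨hy', hz⟩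
        · exact Or.inr ⟨hx, hy⟩
        · exact Or.inr ⟨hx, hz⟩

/-- The product `X^N = 2^N × 𝒫^N` of the subset lattice and the partition lattice,
ordered componentwise. -/
abbrev XN (n : ℕ) := Set (Fin n) × Setoid (Fin n)

/-- The closure operator `cl` on `X^N`:  `cl(∅,P) = (∅,P)` and, for `A ≠ ∅`,
`cl(A,P) = (Ā, P ⊔ P^A_⊥)` where `Ā` is the block of `P ⊔ P^A_⊥` containing `A`. -/
def EmbClosure (n : ℕ) (x : XN n) : XN n :=
  ({y | ∃ a ∈ x.1, (x.2 ⊔ modp n x.1) y a}, x.2 ⊔ modp n x.1)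

/-- An embedded subset is a pair that coincides with its closure. -/
def IsEmbedded (n : ℕ) (x : XN n) : Prop := EmbClosure n x = x

/-- The lattice `ℰ^N` of embedded subsets, with the induced order. -/
abbrev Emb (n : ℕ) := {x : XN n // IsEmbedded n x}

lemma modp_le_of_subsingleton {n : ℕ} {A : Set (Fin n)} (h : A.Subsingleton)
    (Q : Setoid (Fin n)) : modp n A ≤ Q := by
  rw [Setoid.le_def]
  intro x y hxy
  rcases hxy with rfl | ⟨hx, hy⟩
  · exact Q.refl' x
  · obtain rfl := h hx hy
    exact Q.refl' x

lemma modp_eq_bot_of_subsingleton {n : ℕ} {A : Set (Fin n)} (h : A.Subsingleton) :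
    modp n A = ⊥ :=
  le_antisymm (modp_le_of_subsingleton h ⊥) bot_le

lemma embedded_empty (n : ℕ) (Q : Setoid (Fin n)) : IsEmbedded n (∅, Q) := by
  unfold IsEmbedded EmbClosure
  refine Prod.ext ?_ ?_
  · simp
  · simpa using sup_eq_left.mpr (modp_le_of_subsingleton Set.subsingleton_empty Q)

lemma embedded_univ_top (n : ℕ) : IsEmbedded n (Set.univ, ⊤) := by
  unfold IsEmbedded EmbClosure
  refine Prod.ext ?_ ?_
  · ext y
    simp only [Set.mem_setOf_eq, Set.mem_univ, iff_true]
    exact ⟨y, trivial, Setoid.refl' _ y⟩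
  · exact sup_eq_left.mpr le_top

lemma embedded_singleton (n : ℕ) (i : Fin n) : IsEmbedded n ({i}, ⊥) := by
  have hb : modp n ({i} : Set (Fin n)) = ⊥ :=
    modp_eq_bot_of_subsingleton Set.subsingleton_singleton
  unfold IsEmbedded EmbClosure
  refine Prod.ext ?_ ?_
  · ext y
    simp only [Set.mem_setOf_eq, hb, sup_idem, Set.mem_singleton_iff]
    constructor
    · rintro ⟨a, ha, hrel⟩
      subst ha
      have h2 : (⊥ ⊔ modp n {a} : Setoid (Fin n)) y a := hrel
      rw [hb, sup_idem] at h2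
      exact h2
    · rintro rfl
      exact ⟨y, rfl, Setoid.refl' _ y⟩
  · simp [hb]

/-- The bottom element `(∅, P_⊥)` of `ℰ^N`. -/
def botE (n : ℕ) : Emb n := ⟨(∅, ⊥), embedded_empty n ⊥⟩

/-- The top element `(N, P^⊤)` of `ℰ^N`. -/
def topE (n : ℕ) : Emb n := ⟨(Set.univ, ⊤), embedded_univ_top n⟩

/-- The atom `({i}, P_⊥)` of `ℰ^N`. -/
def atomS (n : ℕ) (i : Fin n) : Emb n := ⟨({i}, ⊥), embedded_singleton n i⟩

/-- The atom `(∅, [ij])` of `ℰ^N`, where `[ij]` is the atom of the partition lattice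
whose unique non-singleton block is the pair `{i, j}`. -/
def atomP (n : ℕ) (i j : Fin n) : Emb n := ⟨(∅, modp n {i, j}), embedded_empty n _⟩

/-- A pair is an atom candidate: of the form `({i},P_⊥)` or `(∅,[ij])` with `i ≠ j`. -/
def IsAtomPair (n : ℕ) (a : XN n) : Prop :=
  (∃ i : Fin n, a = ({i}, ⊥)) ∨ ∃ i j : Fin n, i ≠ j ∧ a = (∅, modp n {i, j})

/-- The number of blocks `|P|` of a partition. -/
noncomputable def numBlocks {α : Type*} (P : Setoid α) : ℕ := P.classes.ncard

/-- The rank function `r(A,P) = (n − |P|) + min{|A|,1}` of `ℰ^N`. -/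
noncomputable def erank (n : ℕ) (x : XN n) : ℕ := (n - numBlocks x.2) + min x.1.ncard 1

/-- The partition `Q^S` of `S` induced by a partition `Q` of `N`. -/
def indPart {n : ℕ} (S : Set (Fin n)) (Q : Setoid (Fin n)) : Setoid S :=
  Setoid.comap Subtype.val Q

/-- `mu` is the Möbius function of the (finite) poset `α`. -/
def IsMobius {α : Type*} [PartialOrder α] (mu : α → α → ℤ) : Prop :=
  (∀ x, mu x x = 1) ∧
  (∀ x y, ¬x ≤ y → mu x y = 0) ∧
  (∀ x y, x < y → mu x y = -∑ᶠ z ∈ Set.Ico x y, mu x z)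

open scoped Classical

section MobGeneral
variable {α : Type*} [Finite α] [PartialOrder α]

lemma finsum_Icc_split (f : α → ℤ) {x y : α} (h : x ≤ y) :
    ∑ᶠ z ∈ Set.Icc x y, f z = (∑ᶠ z ∈ Set.Ico x y, f z) + f y := by
  have hd : Disjoint (Set.Ico x y) ({y} : Set α) := by
    simp [Set.disjoint_singleton_right, Set.mem_Ico]
  have hu : Set.Ico x y ∪ {y} = Set.Icc x y := Set.Ico_union_right h
  rw [← hu, finsum_mem_union hd (Set.toFinite _) (Set.toFinite _), finsum_mem_singleton]

lemma mob_sum_Icc {mu : α → α → ℤ} (h : IsMobius mu) {x y : α} (hxy : x ≤ y) :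
    ∑ᶠ z ∈ Set.Icc x y, mu x z = if x = y then 1 else 0 := by
  rcases eq_or_lt_of_le hxy with rfl | hlt
  · simp [finsum_mem_singleton, h.1 x]
  · rw [if_neg hlt.ne, finsum_Icc_split _ hxy, h.2.2 x y hlt]
    ring

lemma mob_unique {mu mu' : α → α → ℤ} (h : IsMobius mu) (h' : IsMobius mu') :
    ∀ x y, mu x y = mu' x y := by
  have key : ∀ k (x y : α), (Set.Icc x y).ncard ≤ k → mu x y = mu' x y := by
    intro k
    induction k with
    | zero =>
      intro x y hk
      by_cases hxy : x ≤ y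
      · exfalso
        have : x ∈ Set.Icc x y := ⟨le_rfl, hxy⟩
        have := Set.ncard_pos (Set.toFinite _) |>.mpr ⟨x, this⟩
        omega
      · rw [h.2.1 x y hxy, h'.2.1 x y hxy]
    | succ k ih =>
      intro x y hk
      by_cases hxy : x ≤ y
      · rcases eq_or_lt_of_le hxy with rfl | hlt
        · rw [h.1, h'.1]
        · rw [h.2.2 x y hlt, h'.2.2 x y hlt]
          congr 1
          apply finsum_mem_congr rfl
          intro z hz
          apply ih
          have hsub : Set.Icc x z ⊆ Set.Icc x y := Set.Icc_subset_Icc le_rfl (le_of_lt hz.2)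
          have hss : Set.Icc x z ⊂ Set.Icc x y := by
            refine ⟨hsub, fun hcon => ?_⟩
            have : y ∈ Set.Icc x z := hcon ⟨hxy, le_rfl⟩
            exact absurd (le_antisymm this.2 (le_of_lt hz.2)) hz.2.ne'
          have := Set.ncard_lt_ncard hss (Set.toFinite _)
          omega
      · rw [h.2.1 x y hxy, h'.2.1 x y hxy]
  exact fun x y => key _ x y le_rfl

end MobGeneral

section MobTransport
variable {α β : Type*} [PartialOrder α] [PartialOrder β]

lemma mob_subtype {mu : α → α → ℤ} (h : IsMobius mu) {p : α → Prop}
    (hconv : ∀ ⦃x y z : α⦄, p x → p y → x ≤ z → z ≤ y → p z) :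
    IsMobius (fun u v : Subtype p => mu ↑u ↑v) := by
  refine ⟨fun u => h.1 u, fun u v huv => h.2.1 _ _ (by simpa [Subtype.coe_le_coe] using huv), ?_⟩
  intro u v huv
  have hlt : (u : α) < v := by exact_mod_cast huv
  show mu ↑u ↑v = -∑ᶠ z ∈ Set.Ico u v, mu ↑u ↑z
  rw [h.2.2 _ _ hlt]
  congr 1
  have himg : Set.Ico (u : α) (v : α) = Subtype.val '' Set.Ico u v := by
    ext z
    constructor
    · rintro ⟨h1, h2⟩
      have hz : p z := hconv u.2 v.2 h1 (le_of_lt h2)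
      exact ⟨⟨z, hz⟩, ⟨h1, by exact_mod_cast h2⟩, rfl⟩
    · rintro ⟨w, ⟨h1, h2⟩, rfl⟩
      exact ⟨h1, by exact_mod_cast h2⟩
  rw [himg, finsum_mem_image (Set.injOn_of_injective Subtype.val_injective)]

lemma mob_transport (e : α ≃o β) {mu : α → α → ℤ} (h : IsMobius mu) :
    IsMobius (fun u v : β => mu (e.symm u) (e.symm v)) := by
  refine ⟨fun u => h.1 _, fun u v huv => h.2.1 _ _ (fun hc => huv (by simpa using e.symm.le_iff_le.mp hc)), ?_⟩
  intro u v huv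
  have hlt : e.symm u < e.symm v := by
    rw [OrderIso.lt_iff_lt]; exact huv
  show mu (e.symm u) (e.symm v) = -∑ᶠ z ∈ Set.Ico u v, mu (e.symm u) (e.symm z)
  rw [h.2.2 _ _ hlt]
  congr 1
  have himg : Set.Ico (e.symm u) (e.symm v) = e.symm '' Set.Ico u v := by
    ext z
    simp only [Set.mem_Ico, Set.mem_image]
    constructor
    · rintro ⟨h1, h2⟩
      exact ⟨e z, ⟨by simpa using e.monotone h1, by simpa using e.strictMono h2⟩, by simp⟩
    · rintro ⟨w, ⟨h1, h2⟩, rfl⟩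
      exact ⟨by simpa using e.symm.monotone h1, by simpa using e.symm.strictMono h2⟩
  rw [himg, finsum_mem_image (Set.injOn_of_injective e.symm.injective)]

lemma mob_prod [Finite α] [Finite β] {mu2 : α → α → ℤ} {mu3 : β → β → ℤ}
    (h2 : IsMobius mu2) (h3 : IsMobius mu3) :
    IsMobius (fun u v : α × β => mu2 u.1 v.1 * mu3 u.2 v.2) := by
  have hIcc : ∀ u v : α × β, u ≤ v →
      ∑ᶠ w ∈ Set.Icc u v, mu2 u.1 w.1 * mu3 u.2 w.2 =
        (if u.1 = v.1 then 1 else 0 : ℤ) * (if u.2 = v.2 then 1 else 0 : ℤ) := by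
    intro u v huv
    classical
    have h1 := (Set.toFinite (Set.Icc u.1 v.1))
    have h2' := (Set.toFinite (Set.Icc u.2 v.2))
    have hprod : Set.Icc u v = ↑(h1.toFinset ×ˢ h2'.toFinset) := by
      rw [Finset.coe_product, Set.Finite.coe_toFinset, Set.Finite.coe_toFinset]
      exact Set.Icc_prod_eq u v
    rw [hprod, finsum_mem_coe_finset, Finset.sum_product]
    rw [← Finset.sum_mul_sum]
    rw [← finsum_mem_coe_finset, ← finsum_mem_coe_finset,
      Set.Finite.coe_toFinset, Set.Finite.coe_toFinset,
      mob_sum_Icc h2 huv.1, mob_sum_Icc h3 huv.2]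
  refine ⟨fun u => by simp [h2.1, h3.1], ?_, ?_⟩
  · intro u v huv
    rw [Prod.le_def, not_and_or] at huv
    show mu2 u.1 v.1 * mu3 u.2 v.2 = 0
    rcases huv with h | h
    · rw [h2.2.1 _ _ h, zero_mul]
    · rw [h3.2.1 _ _ h, mul_zero]
  · intro u v huv
    have huv' := le_of_lt huv
    have := hIcc u v huv'
    rw [finsum_Icc_split _ huv'] at this
    have hne : ¬(u.1 = v.1 ∧ u.2 = v.2) := by
      intro ⟨e1, e2⟩; exact huv.ne (Prod.ext e1 e2)
    have hz : (if u.1 = v.1 then 1 else 0 : ℤ) * (if u.2 = v.2 then 1 else 0 : ℤ) = 0 := by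
      by_cases e1 : u.1 = v.1 <;> by_cases e2 : u.2 = v.2 <;> simp_all
    rw [hz] at this
    show mu2 u.1 v.1 * mu3 u.2 v.2 = -∑ᶠ z ∈ Set.Ico u v, mu2 u.1 z.1 * mu3 u.2 z.2
    linarith
end MobTransport

instance {α : Type*} [Finite α] : Finite (Setoid α) :=
  Finite.of_injective (fun s : Setoid α => s.r)
    (fun s t h => by cases s; cases t; congr 1)

section EmbChar
variable {n : ℕ}

lemma modp_le_iff {B : Set (Fin n)} {R : Setoid (Fin n)} :
    modp n B ≤ R ↔ ∀ x ∈ B, ∀ y ∈ B, R.r x y := by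
  rw [Setoid.le_def]
  constructor
  · intro h x hx y hy
    exact h (Or.inr ⟨hx, hy⟩)
  · intro h x y hxy
    rcases hxy with rfl | ⟨hx, hy⟩
    · exact R.refl' x
    · exact h x hx y hy

lemma isEmbedded_iff {B : Set (Fin n)} {R : Setoid (Fin n)} :
    IsEmbedded n (B, R) ↔
      (∀ x ∈ B, ∀ y ∈ B, R.r x y) ∧ (∀ y a, a ∈ B → R.r y a → y ∈ B) := by
  unfold IsEmbedded EmbClosure
  constructor
  · intro h
    have h2 : R ⊔ modp n B = R := congrArg Prod.snd h
    have hle : modp n B ≤ R := sup_eq_left.mp h2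
    have h1 : {y | ∃ a ∈ B, (R ⊔ modp n B) y a} = B := congrArg Prod.fst h
    rw [h2] at h1
    refine ⟨modp_le_iff.mp hle, ?_⟩
    intro y a ha hya
    rw [← h1]
    exact ⟨a, ha, hya⟩
  · rintro ⟨hrel, hcl⟩
    have hle : modp n B ≤ R := modp_le_iff.mpr hrel
    have h2 : R ⊔ modp n B = R := sup_eq_left.mpr hle
    refine Prod.ext ?_ h2
    rw [h2]
    ext y
    simp only [Set.mem_setOf_eq]
    constructor
    · rintro ⟨a, ha, hya⟩
      exact hcl y a ha hya
    · intro hy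
      exact ⟨y, hy, R.refl' y⟩

lemma indPart_mono {S : Set (Fin n)} {Q R : Setoid (Fin n)} (h : Q ≤ R) :
    indPart S Q ≤ indPart S R := by
  rw [Setoid.le_def] at h ⊢
  intro u v huv
  exact h huv

end EmbChar

section IsoAux
variable {n m : ℕ} {A : Set (Fin n)} {Q P : Setoid (Fin n)} (f : ↥A → Fin m)

def fSet (B : Set (Fin n)) : Set (Fin m) := {i | ∃ a : ↥A, f a = i ∧ ↑a ∈ B}

def fRel (R : Setoid (Fin n)) (i j : Fin m) : Prop :=
  ∃ a b : ↥A, f a = i ∧ f b = j ∧ R.r ↑a ↑b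

def gSet (B' : Set (Fin m)) : Set (Fin n) := {x | ∃ hx : x ∈ A, f ⟨x, hx⟩ ∈ B'}

def glue (R' : Setoid (Fin m)) (S : Setoid ↥Aᶜ) : Setoid (Fin n) where
  r x y := (∃ hx : x ∈ A, ∃ hy : y ∈ A, R'.r (f ⟨x, hx⟩) (f ⟨y, hy⟩)) ∨
    (∃ hx : x ∈ Aᶜ, ∃ hy : y ∈ Aᶜ, S.r ⟨x, hx⟩ ⟨y, hy⟩)
  iseqv := by
    constructor
    · intro x
      by_cases hx : x ∈ A
      · exact Or.inl ⟨hx, hx, R'.refl' _⟩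
      · exact Or.inr ⟨hx, hx, S.refl' _⟩
    · rintro x y (⟨hx, hy, h⟩ | ⟨hx, hy, h⟩)
      · exact Or.inl ⟨hy, hx, R'.symm' h⟩
      · exact Or.inr ⟨hy, hx, S.symm' h⟩
    · rintro x y z (⟨hx, hy, h⟩ | ⟨hx, hy, h⟩) (⟨hy', hz, h'⟩ | ⟨hy', hz, h'⟩)
      · exact Or.inl ⟨hx, hz, R'.trans' h h'⟩
      · exact absurd hy hy'
      · exact absurd hy' hy
      · exact Or.inr ⟨hx, hz, S.trans' h h'⟩

lemma fRel_equivalence (hf : ∀ a b : ↥A, f a = f b ↔ Q.r ↑a ↑b)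
    (hsurj : Function.Surjective f) {R : Setoid (Fin n)} (hQR : Q ≤ R) : Equivalence (fRel f R) := by
  have hQR' : ∀ x y, Q.r x y → R.r x y := fun _ _ h => Setoid.le_def.mp hQR h
  constructor
  · intro i
    obtain ⟨a, rfl⟩ := hsurj i
    exact ⟨a, a, rfl, rfl, R.refl' _⟩
  · rintro i j ⟨a, b, rfl, rfl, h⟩
    exact ⟨b, a, rfl, rfl, R.symm' h⟩
  · rintro i j k ⟨a, b, rfl, rfl, h⟩ ⟨b', c, hb', rfl, h'⟩
    have hbb : Q.r ↑b' ↑b := (hf b' b).mp hb'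
    exact ⟨a, c, rfl, rfl, R.trans' (R.trans' h (R.symm' (hQR' _ _ hbb))) h'⟩

lemma fwd_embedded (hf : ∀ a b : ↥A, f a = f b ↔ Q.r ↑a ↑b)
    (hsurj : Function.Surjective f) {B : Set (Fin n)} {R : Setoid (Fin n)} (hQR : Q ≤ R)
    (hBR : IsEmbedded n (B, R)) :
    IsEmbedded m (fSet f B, ⟨fRel f R, fRel_equivalence f hf hsurj hQR⟩) := by
  have hQR' : ∀ x y, Q.r x y → R.r x y := fun _ _ h => Setoid.le_def.mp hQR h
  rw [isEmbedded_iff] at hBR ⊢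
  obtain ⟨h1, h2⟩ := hBR
  constructor
  · rintro i ⟨a, rfl, ha⟩ j ⟨b, rfl, hb⟩
    exact ⟨a, b, rfl, rfl, h1 _ ha _ hb⟩
  · rintro j i ⟨w, rfl, hw⟩ ⟨u, v, rfl, hv, huv⟩
    have hQvw : Q.r ↑v ↑w := (hf v w).mp hv
    exact ⟨u, rfl, h2 _ _ hw (R.trans' huv (hQR' _ _ hQvw))⟩

lemma glue_embedded {B' : Set (Fin m)} {R' : Setoid (Fin m)} {S : Setoid ↥Aᶜ}
    (hE : IsEmbedded m (B', R')) :
    IsEmbedded n (gSet f B', glue f R' S) := by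
  rw [isEmbedded_iff] at hE ⊢
  obtain ⟨h1, h2⟩ := hE
  constructor
  · rintro x ⟨hx, hfx⟩ y ⟨hy, hfy⟩
    exact Or.inl ⟨hx, hy, h1 _ hfx _ hfy⟩
  · rintro y a ⟨ha, hfa⟩ (⟨hy, ha', hr⟩ | ⟨hy, ha', _⟩)
    · exact ⟨hy, h2 _ _ hfa hr⟩
    · exact absurd ha ha'

lemma glue_ge (hf : ∀ a b : ↥A, f a = f b ↔ Q.r ↑a ↑b) (hQP : Q ≤ P) (hPA2 : ∀ y a, a ∈ A → P.r y a → y ∈ A)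
    {R' : Setoid (Fin m)} {S : Setoid ↥Aᶜ} (hS : indPart Aᶜ Q ≤ S) :
    Q ≤ glue f R' S := by
  have hQP' : ∀ x y, Q.r x y → P.r x y := fun _ _ h => Setoid.le_def.mp hQP h
  have hS' : ∀ u v, (indPart Aᶜ Q).r u v → S.r u v := fun _ _ h => Setoid.le_def.mp hS h
  rw [Setoid.le_def]
  intro x y hxy
  by_cases hx : x ∈ A
  · have hy : y ∈ A := hPA2 y x hx (P.symm' (hQP' _ _ hxy))
    have hfe : f ⟨x, hx⟩ = f ⟨y, hy⟩ := (hf _ _).mpr hxy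
    exact Or.inl ⟨hx, hy, by rw [hfe]⟩
  · have hy : y ∉ A := fun hy => hx (hPA2 x y hy (hQP' _ _ hxy))
    exact Or.inr ⟨hx, hy, hS' ⟨x, hx⟩ ⟨y, hy⟩ hxy⟩

lemma glue_le (hPA1 : ∀ x ∈ A, ∀ y ∈ A, P.r x y)
    {R' : Setoid (Fin m)} {S : Setoid ↥Aᶜ} (hS : S ≤ indPart Aᶜ P) :
    glue f R' S ≤ P := by
  have hS' : ∀ u v, S.r u v → (indPart Aᶜ P).r u v := fun _ _ h => Setoid.le_def.mp hS h
  rw [Setoid.le_def]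
  rintro x y (⟨hx, hy, _⟩ | ⟨hx, hy, h⟩)
  · exact hPA1 x hx y hy
  · exact hS' _ _ h

lemma gF_Set (hf : ∀ a b : ↥A, f a = f b ↔ Q.r ↑a ↑b) {B : Set (Fin n)} {R : Setoid (Fin n)} (hQR : Q ≤ R)
    (hcl : ∀ y a, a ∈ B → R.r y a → y ∈ B) (hBA : B ⊆ A) :
    gSet f (fSet f B) = B := by
  have hQR' : ∀ x y, Q.r x y → R.r x y := fun _ _ h => Setoid.le_def.mp hQR h
  ext x
  constructor
  · rintro ⟨hx, a, ha, haB⟩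
    have hQax : Q.r ↑a x := (hf a ⟨x, hx⟩).mp ha
    exact hcl x ↑a haB (R.symm' (hQR' _ _ hQax))
  · intro hxB
    exact ⟨hBA hxB, ⟨x, hBA hxB⟩, rfl, hxB⟩

lemma gF_Rel (hf : ∀ a b : ↥A, f a = f b ↔ Q.r ↑a ↑b) {R : Setoid (Fin n)} (hQR : Q ≤ R) (hRP : R ≤ P)
    (hPA2 : ∀ y a, a ∈ A → P.r y a → y ∈ A) (hEq : Equivalence (fRel f R)) :
    glue f ⟨fRel f R, hEq⟩ (indPart Aᶜ R) = R := by
  have hQR' : ∀ x y, Q.r x y → R.r x y := fun _ _ h => Setoid.le_def.mp hQR h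
  have hRP' : ∀ x y, R.r x y → P.r x y := fun _ _ h => Setoid.le_def.mp hRP h
  apply Setoid.ext
  intro x y
  constructor
  · rintro (⟨hx, hy, u, v, hu, hv, huv⟩ | ⟨hx, hy, h⟩)
    · have h1 : Q.r ↑u x := (hf u ⟨x, hx⟩).mp hu
      have h2 : Q.r ↑v y := (hf v ⟨y, hy⟩).mp hv
      exact R.trans' (R.trans' (R.symm' (hQR' _ _ h1)) huv) (hQR' _ _ h2)
    · exact h
  · intro hxy
    by_cases hx : x ∈ A
    · have hy : y ∈ A := hPA2 y x hx (P.symm' (hRP' _ _ hxy))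
      exact Or.inl ⟨hx, hy, ⟨x, hx⟩, ⟨y, hy⟩, rfl, rfl, hxy⟩
    · have hy : y ∉ A := fun hy => hx (hPA2 x y hy (hRP' _ _ hxy))
      exact Or.inr ⟨hx, hy, hxy⟩

lemma Fg_Set (hsurj : Function.Surjective f) {B' : Set (Fin m)} : fSet f (gSet f B') = B' := by
  ext i
  constructor
  · rintro ⟨a, rfl, ha, hfa⟩
    exact hfa
  · intro hi
    obtain ⟨a, rfl⟩ := hsurj i
    exact ⟨a, rfl, a.2, hi⟩

lemma Fg_Rel (hsurj : Function.Surjective f) {R' : Setoid (Fin m)} {S : Setoid ↥Aᶜ}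
    (hEq : Equivalence (fRel f (glue f R' S))) :
    (⟨fRel f (glue f R' S), hEq⟩ : Setoid (Fin m)) = R' := by
  apply Setoid.ext
  intro i j
  show fRel f (glue f R' S) i j ↔ R'.r i j
  constructor
  · rintro ⟨a, b, rfl, rfl, (⟨ha, hb, h⟩ | ⟨ha, hb, h⟩)⟩
    · exact h
    · exact absurd a.2 ha
  · intro h
    obtain ⟨a, rfl⟩ := hsurj i
    obtain ⟨b, rfl⟩ := hsurj j
    exact ⟨a, b, rfl, rfl, Or.inl ⟨a.2, b.2, h⟩⟩

lemma Fg_S {R' : Setoid (Fin m)} {S : Setoid ↥Aᶜ} :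
    indPart Aᶜ (glue f R' S) = S := by
  apply Setoid.ext
  intro u v
  show (glue f R' S).r ↑u ↑v ↔ S.r u v
  constructor
  · rintro (⟨hu, hv, h⟩ | ⟨hu, hv, h⟩)
    · exact absurd hu u.2
    · exact h
  · intro h
    exact Or.inr ⟨u.2, v.2, h⟩

lemma fSet_mono {B B2 : Set (Fin n)} (h : B ⊆ B2) : fSet f B ⊆ fSet f B2 := by
  rintro i ⟨a, rfl, ha⟩
  exact ⟨a, rfl, h ha⟩

lemma fRelS_mono {R R2 : Setoid (Fin n)} (hE : Equivalence (fRel f R))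
    (hE2 : Equivalence (fRel f R2)) (h : R ≤ R2) :
    (⟨fRel f R, hE⟩ : Setoid (Fin m)) ≤ ⟨fRel f R2, hE2⟩ := by
  have h' : ∀ x y, R.r x y → R2.r x y := fun _ _ hh => Setoid.le_def.mp h hh
  rw [Setoid.le_def]
  rintro i j ⟨a, b, rfl, rfl, hab⟩
  exact ⟨a, b, rfl, rfl, h' _ _ hab⟩

lemma gSet_mono {B' B2' : Set (Fin m)} (h : B' ⊆ B2') : gSet f B' ⊆ gSet f B2' := by
  rintro x ⟨hx, hfx⟩
  exact ⟨hx, h hfx⟩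

lemma glue_mono {R' R2' : Setoid (Fin m)} {S S2 : Setoid ↥Aᶜ}
    (hR : R' ≤ R2') (hS : S ≤ S2) : glue f R' S ≤ glue f R2' S2 := by
  have hR' : ∀ x y, R'.r x y → R2'.r x y := fun _ _ h => Setoid.le_def.mp hR h
  have hS' : ∀ x y, S.r x y → S2.r x y := fun _ _ h => Setoid.le_def.mp hS h
  rw [Setoid.le_def]
  rintro x y (⟨hx, hy, h⟩ | ⟨hx, hy, h⟩)
  · exact Or.inl ⟨hx, hy, hR' _ _ h⟩
  · exact Or.inr ⟨hx, hy, hS' _ _ h⟩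

lemma gSet_sub_A {B' : Set (Fin m)} : gSet f B' ⊆ A := fun _ hx => hx.1

end IsoAux

lemma iso_exists {n m : ℕ} (A : Set (Fin n)) (Q P : Setoid (Fin n))
    (hQ : IsEmbedded n (∅, Q)) (hP : IsEmbedded n (A, P)) (hQP : Q ≤ P)
    (f : ↥A → Fin m) (hf : ∀ a b : ↥A, f a = f b ↔ Q.r ↑a ↑b)
    (hsurj : Function.Surjective f) :
    Nonempty ({z : Emb n // (⟨(∅, Q), hQ⟩ : Emb n) ≤ z ∧ z ≤ ⟨(A, P), hP⟩} ≃o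
      Emb m × Set.Icc (indPart Aᶜ Q) (indPart Aᶜ P)) := by
  obtain ⟨hPA1, hPA2⟩ := isEmbedded_iff.mp hP
  refine ⟨Equiv.toOrderIso
    ⟨fun z => (⟨(fSet f z.1.1.1, ⟨fRel f z.1.1.2, fRel_equivalence f hf hsurj z.2.1.2⟩),
        fwd_embedded f hf hsurj z.2.1.2 z.1.2⟩,
      ⟨indPart Aᶜ z.1.1.2, indPart_mono z.2.1.2, indPart_mono z.2.2.2⟩),
     fun w => ⟨⟨(gSet f w.1.1.1, glue f w.1.1.2 w.2.1), glue_embedded f w.1.2⟩,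
       ⟨Set.empty_subset _, glue_ge f hf hQP hPA2 w.2.2.1⟩,
       ⟨gSet_sub_A f, glue_le f hPA1 w.2.2.2⟩⟩, ?_, ?_⟩ ?_ ?_⟩
  · intro z
    apply Subtype.ext
    apply Subtype.ext
    refine Prod.ext ?_ ?_
    · exact gF_Set f hf z.2.1.2 (isEmbedded_iff.mp z.1.2).2 z.2.2.1
    · exact gF_Rel f hf z.2.1.2 z.2.2.2 hPA2 _
  · intro w
    refine Prod.ext ?_ ?_
    · apply Subtype.ext
      refine Prod.ext ?_ ?_
      · exact Fg_Set f hsurj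
      · exact Fg_Rel f hsurj _
    · apply Subtype.ext
      exact Fg_S f
  · intro z w h
    exact ⟨⟨fSet_mono f h.1, fRelS_mono f _ _ h.2⟩, indPart_mono h.2⟩
  · intro w w2 h
    exact ⟨gSet_mono f h.1.1, glue_mono f h.1.2 h.2⟩

theorem interval_empty_subset (n : ℕ) (hn : 1 ≤ n) (A : Set (Fin n)) (hA : A ≠ ∅)
    (Q P : Setoid (Fin n)) (hQ : IsEmbedded n (∅, Q)) (hP : IsEmbedded n (A, P))
    (hle : ((∅, Q) : XN n) ≤ (A, P)) :
    Nonempty ({z : Emb n // (⟨(∅, Q), hQ⟩ : Emb n) ≤ z ∧ z ≤ ⟨(A, P), hP⟩} ≃o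
        Emb (numBlocks (indPart A Q)) × Set.Icc (indPart Aᶜ Q) (indPart Aᶜ P)) ∧
    ∀ (mu1 : Emb n → Emb n → ℤ)
      (mu2 : Emb (numBlocks (indPart A Q)) → Emb (numBlocks (indPart A Q)) → ℤ)
      (mu3 : Setoid ↥Aᶜ → Setoid ↥Aᶜ → ℤ),
      IsMobius mu1 → IsMobius mu2 → IsMobius mu3 →
      mu1 ⟨(∅, Q), hQ⟩ ⟨(A, P), hP⟩ =
        mu2 (botE _) (topE _) * mu3 (indPart Aᶜ Q) (indPart Aᶜ P) := by
  classical
  have hQP : Q ≤ P := hle.2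
  letI : Fintype (Quotient (indPart A Q)) := Fintype.ofFinite _
  have hcard : Fintype.card (Quotient (indPart A Q)) = numBlocks (indPart A Q) := by
    rw [← Nat.card_eq_fintype_card, numBlocks, ← Nat.card_coe_set_eq]
    exact Nat.card_congr (Setoid.quotientEquivClasses _)
  let σ : Quotient (indPart A Q) ≃ Fin (numBlocks (indPart A Q)) :=
    Fintype.equivFinOfCardEq hcard
  let f : ↥A → Fin (numBlocks (indPart A Q)) := fun a => σ (Quotient.mk _ a)
  have hf : ∀ a b : ↥A, f a = f b ↔ Q.r ↑a ↑b := by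
    intro a b
    constructor
    · intro h
      have hab : (indPart A Q).r a b := Quotient.exact (σ.injective h)
      exact hab
    · intro h
      show σ _ = σ _
      congr 1
      exact Quotient.sound h
  have hsurj : Function.Surjective f := by
    intro i
    obtain ⟨a, ha⟩ := Quotient.exists_rep (σ.symm i)
    exact ⟨a, by simp [f, ha]⟩
  obtain ⟨e⟩ := iso_exists A Q P hQ hP hQP f hf hsurj
  refine ⟨⟨e⟩, ?_⟩
  intro mu1 mu2 mu3 h1 h2 h3
  have hlohi : (⟨(∅, Q), hQ⟩ : Emb n) ≤ ⟨(A, P), hP⟩ := hle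
  have hconv : ∀ ⦃x y z : Emb n⦄,
      ((⟨(∅, Q), hQ⟩ : Emb n) ≤ x ∧ x ≤ ⟨(A, P), hP⟩) →
      ((⟨(∅, Q), hQ⟩ : Emb n) ≤ y ∧ y ≤ ⟨(A, P), hP⟩) → x ≤ z → z ≤ y →
      ((⟨(∅, Q), hQ⟩ : Emb n) ≤ z ∧ z ≤ ⟨(A, P), hP⟩) :=
    fun x y z hx hy hxz hzy => ⟨le_trans hx.1 hxz, le_trans hzy hy.2⟩
  have hm1 := mob_subtype h1 hconv
  have hmT := mob_transport e hm1
  have hconv3 : ∀ ⦃x y z : Setoid ↥Aᶜ⦄,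
      x ∈ Set.Icc (indPart Aᶜ Q) (indPart Aᶜ P) →
      y ∈ Set.Icc (indPart Aᶜ Q) (indPart Aᶜ P) → x ≤ z → z ≤ y →
      z ∈ Set.Icc (indPart Aᶜ Q) (indPart Aᶜ P) :=
    fun x y z hx hy hxz hzy => ⟨le_trans hx.1 hxz, le_trans hzy hy.2⟩
  have hm3 := mob_subtype h3 hconv3
  have hmP := mob_prod h2 hm3
  have hQIcc : indPart Aᶜ Q ∈ Set.Icc (indPart Aᶜ Q) (indPart Aᶜ P) :=
    ⟨le_rfl, indPart_mono hQP⟩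
  have hPIcc : indPart Aᶜ P ∈ Set.Icc (indPart Aᶜ Q) (indPart Aᶜ P) :=
    ⟨indPart_mono hQP, le_rfl⟩
  set b0 : {z : Emb n // (⟨(∅, Q), hQ⟩ : Emb n) ≤ z ∧ z ≤ ⟨(A, P), hP⟩} :=
    ⟨⟨(∅, Q), hQ⟩, le_rfl, hlohi⟩ with hb0
  set t0 : {z : Emb n // (⟨(∅, Q), hQ⟩ : Emb n) ≤ z ∧ z ≤ ⟨(A, P), hP⟩} :=
    ⟨⟨(A, P), hP⟩, hlohi, le_rfl⟩ with ht0
  have hbot : e b0 = (botE _, ⟨indPart Aᶜ Q, hQIcc⟩) := by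
    apply le_antisymm
    · have h' : b0 ≤ e.symm (botE _, ⟨indPart Aᶜ Q, hQIcc⟩) :=
        (e.symm (botE _, ⟨indPart Aᶜ Q, hQIcc⟩)).2.1
      have := e.monotone h'
      rwa [e.apply_symm_apply] at this
    · exact ⟨⟨Set.empty_subset _, bot_le⟩, (e b0).2.2.1⟩
  have htop : e t0 = (topE _, ⟨indPart Aᶜ P, hPIcc⟩) := by
    apply le_antisymm
    · exact ⟨⟨Set.subset_univ _, le_top⟩, (e t0).2.2.2⟩
    · have h' : e.symm (topE _, ⟨indPart Aᶜ P, hPIcc⟩) ≤ t0 :=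
        (e.symm (topE _, ⟨indPart Aᶜ P, hPIcc⟩)).2.2
      have := e.monotone h'
      rwa [e.apply_symm_apply] at this
  have key : mu1 ↑(e.symm (e b0)) ↑(e.symm (e t0)) =
      mu2 (e b0).1 (e t0).1 * mu3 ↑(e b0).2 ↑(e t0).2 :=
    mob_unique hmT hmP (e b0) (e t0)
  rw [e.symm_apply_apply, e.symm_apply_apply, hbot, htop] at key
  exact key
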